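/- Let a₀, a₁, a₂, b₀, b₁ be real with a₀ > 0, a₂ > 0 and a₀x⁴ + a₁x² + a₂ > 0 for all real x. Then ∫₀^∞ (b₀z² + b₁)/(a₀z⁴ + a₁z² + a₂) dz = ∫₀^∞ (b₀⁽¹⁾w² + b₁⁽¹⁾)/(a₀⁽¹⁾w⁴ + a₁⁽¹⁾w² + a₂⁽¹⁾) dw, where b₀⁽¹⁾ = 8(a₂b₀ + a₀b₁), b₁⁽¹⁾ = 2(a₀+a₁+a₂)(b₀+b₁), a₀⁽¹⁾ = 16a₀a₂, a₁⁽¹⁾ = 4(a₀a₁ + 4a₀a₂ + a₁a₂), a₂⁽¹⁾ = (a₀+a₁+a₂)². -/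

import Mathlib

set_option maxHeartbeats 1000000

open MeasureTheory
open Set

lemma landen_lb (a₀ a₁ a₂ : ℝ) (ha₀ : 0 < a₀) (ha₂ : 0 < a₂)
    (hpos : ∀ x : ℝ, 0 < a₀ * x ^ 4 + a₁ * x ^ 2 + a₂) :
    ∃ c > 0, ∀ z : ℝ, c * (z ^ 4 + 1) ≤ a₀ * z ^ 4 + a₁ * z ^ 2 + a₂ := by
  rcases le_or_gt 0 a₁ with h1 | h1
  · refine ⟨min a₀ a₂, lt_min ha₀ ha₂, fun z => ?_⟩
    have h2 : min a₀ a₂ ≤ a₀ := min_le_left _ _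
    have h3 : min a₀ a₂ ≤ a₂ := min_le_right _ _
    nlinarith [sq_nonneg z, sq_nonneg (z ^ 2), mul_nonneg h1 (sq_nonneg z)]
  · have ht : (0:ℝ) ≤ -a₁ / (2 * a₀) := div_nonneg (by linarith) (by linarith)
    have hs := Real.sq_sqrt ht
    have hp := hpos (Real.sqrt (-a₁ / (2 * a₀)))
    have h4 : Real.sqrt (-a₁ / (2 * a₀)) ^ 4 = (-a₁ / (2 * a₀)) ^ 2 := by
      rw [show (4:ℕ) = 2 * 2 from rfl, pow_mul, hs]
    rw [h4, hs] at hp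
    have hK : a₁ ^ 2 < 4 * a₀ * a₂ := by
      have h5 : 0 < (a₀ * (-a₁ / (2 * a₀)) ^ 2 + a₁ * (-a₁ / (2 * a₀)) + a₂) * (4 * a₀) :=
        mul_pos hp (by linarith)
      have h6 : (a₀ * (-a₁ / (2 * a₀)) ^ 2 + a₁ * (-a₁ / (2 * a₀)) + a₂) * (4 * a₀)
          = 4 * a₀ * a₂ - a₁ ^ 2 := by field_simp; ring
      linarith [h6 ▸ h5]
    set e := 4 * a₀ * a₂ - a₁ ^ 2 with he
    have he0 : 0 < e := by linarith
    refine ⟨min (min a₀ a₂) (e / (4 * (a₀ + a₂))), by positivity, fun z => ?_⟩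
    set c := min (min a₀ a₂) (e / (4 * (a₀ + a₂))) with hc
    have hc1 : c ≤ a₀ := le_trans (min_le_left _ _) (min_le_left _ _)
    have hc2 : c ≤ a₂ := le_trans (min_le_left _ _) (min_le_right _ _)
    have hc3 : c * (4 * (a₀ + a₂)) ≤ e := by
      have := min_le_right (min a₀ a₂) (e / (4 * (a₀ + a₂)))
      rw [le_div_iff₀ (by positivity)] at this
      linarith [this]
    have hc0 : 0 < c := by positivity
    have hdisc : a₁ ^ 2 ≤ 4 * (a₀ - c) * (a₂ - c) := by nlinarith [sq_nonneg c]
    have ha0c : 0 < a₀ - c := by nlinarith [sq_nonneg a₁]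
    nlinarith [sq_nonneg (2 * (a₀ - c) * z ^ 2 + a₁), sq_nonneg z, sq_nonneg (z ^ 2)]

lemma landen_int (a₀ a₁ a₂ b₀ b₁ : ℝ) (ha₀ : 0 < a₀) (ha₂ : 0 < a₂)
    (hpos : ∀ x : ℝ, 0 < a₀ * x ^ 4 + a₁ * x ^ 2 + a₂) :
    Integrable (fun z : ℝ => (b₀ * z ^ 2 + b₁) / (a₀ * z ^ 4 + a₁ * z ^ 2 + a₂)) := by
  obtain ⟨c, hc, hcb⟩ := landen_lb a₀ a₁ a₂ ha₀ ha₂ hpos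
  apply Integrable.mono' (integrable_inv_one_add_sq.const_mul (2 * (|b₀| + |b₁|) / c))
  · exact (Continuous.div (by continuity) (by continuity) fun x => (hpos x).ne').aestronglyMeasurable
  · filter_upwards with z
    have hden := hpos z
    have h1 : (0:ℝ) < 1 + z ^ 2 := by positivity
    rw [Real.norm_eq_abs, abs_div, abs_of_pos hden, ← div_eq_mul_inv,
      div_le_div_iff₀ hden h1]
    have hnum : |b₀ * z ^ 2 + b₁| ≤ |b₀| * z ^ 2 + |b₁| := by
      calc |b₀ * z ^ 2 + b₁| ≤ |b₀ * z ^ 2| + |b₁| := abs_add_le _ _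
        _ = |b₀| * z ^ 2 + |b₁| := by rw [abs_mul, abs_pow, sq_abs]
    have hMc : 2 * (|b₀| + |b₁|) / c * c = 2 * (|b₀| + |b₁|) := by field_simp
    have hM : 0 ≤ 2 * (|b₀| + |b₁|) / c := by positivity
    have h7 : 2 * (|b₀| + |b₁|) * (z ^ 4 + 1)
        ≤ 2 * (|b₀| + |b₁|) / c * (a₀ * z ^ 4 + a₁ * z ^ 2 + a₂) := by
      calc 2 * (|b₀| + |b₁|) * (z ^ 4 + 1)
          = 2 * (|b₀| + |b₁|) / c * c * (z ^ 4 + 1) := by rw [hMc]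
        _ = 2 * (|b₀| + |b₁|) / c * (c * (z ^ 4 + 1)) := by ring
        _ ≤ _ := mul_le_mul_of_nonneg_left (hcb z) hM
    nlinarith [h7, mul_le_mul_of_nonneg_right hnum h1.le,
      mul_nonneg (abs_nonneg b₀) (sq_nonneg (z ^ 2 - 1)),
      mul_nonneg (abs_nonneg b₁) (sq_nonneg (z ^ 2 - 1)),
      mul_nonneg (abs_nonneg b₁) (sq_nonneg z), mul_nonneg (abs_nonneg b₀) (sq_nonneg z)]

/-- The degree-4 rational Landen transformation preserves the integral over `(0,∞)`. -/
theorem landen_degree_four (a₀ a₁ a₂ b₀ b₁ : ℝ)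
    (ha₀ : 0 < a₀) (ha₂ : 0 < a₂)
    (hpos : ∀ x : ℝ, 0 < a₀ * x ^ 4 + a₁ * x ^ 2 + a₂) :
    ∫ z in Set.Ioi (0:ℝ), (b₀ * z ^ 2 + b₁) / (a₀ * z ^ 4 + a₁ * z ^ 2 + a₂)
      = ∫ w in Set.Ioi (0:ℝ),
          (8 * (a₂ * b₀ + a₀ * b₁) * w ^ 2 + 2 * (a₀ + a₁ + a₂) * (b₀ + b₁)) /
          (16 * a₀ * a₂ * w ^ 4 + 4 * (a₀ * a₁ + 4 * a₀ * a₂ + a₁ * a₂) * w ^ 2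
            + (a₀ + a₁ + a₂) ^ 2) := by
  set F : ℝ → ℝ := fun z => (b₀ * z ^ 2 + b₁) / (a₀ * z ^ 4 + a₁ * z ^ 2 + a₂) with hF
  set G : ℝ → ℝ := fun w =>
      (8 * (a₂ * b₀ + a₀ * b₁) * w ^ 2 + 2 * (a₀ + a₁ + a₂) * (b₀ + b₁)) /
      (16 * a₀ * a₂ * w ^ 4 + 4 * (a₀ * a₁ + 4 * a₀ * a₂ + a₁ * a₂) * w ^ 2
        + (a₀ + a₁ + a₂) ^ 2) with hG
  set φ : ℝ → ℝ := fun z => (z ^ 2 - 1) / (2 * z) with hφ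
  -- positivity of the reversed quartic
  have hq : ∀ z : ℝ, 0 < a₂ * z ^ 4 + a₁ * z ^ 2 + a₀ := by
    intro z
    rcases eq_or_ne z 0 with rfl | hz
    · simpa using ha₀
    · have h2 : (a₀ * (z⁻¹) ^ 4 + a₁ * (z⁻¹) ^ 2 + a₂) * z ^ 4
          = a₂ * z ^ 4 + a₁ * z ^ 2 + a₀ := by field_simp; ring
      rw [← h2]
      exact mul_pos (hpos z⁻¹) (by positivity)
  have hFint : IntegrableOn F (Ioi 0) :=
    (landen_int a₀ a₁ a₂ b₀ b₁ ha₀ ha₂ hpos).integrableOn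
  -- inversion map on (1,∞)
  have hinv_deriv : ∀ z ∈ Ioi (1:ℝ), HasDerivWithinAt (fun z : ℝ => z⁻¹) (-(z ^ 2)⁻¹) (Ioi 1) z :=
    fun z hz => (hasDerivAt_inv (by have : (1:ℝ) < z := hz; positivity)).hasDerivWithinAt
  have hinv_inj : InjOn (fun z : ℝ => z⁻¹) (Ioi 1) := fun x _ y _ h => inv_injective h
  have himg : (fun z : ℝ => z⁻¹) '' (Ioi 1) = Ioo 0 1 := by
    ext x
    simp only [mem_image, mem_Ioi, mem_Ioo]
    constructor
    · rintro ⟨z, hz, rfl⟩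
      exact ⟨inv_pos.mpr (lt_trans one_pos hz), inv_lt_one_of_one_lt₀ hz⟩
    · rintro ⟨hx0, hx1⟩
      exact ⟨x⁻¹, (one_lt_inv₀ hx0).mpr hx1, inv_inv x⟩
  have step1 : ∫ z in Ioo (0:ℝ) 1, F z = ∫ z in Ioi (1:ℝ), |(-(z ^ 2)⁻¹)| • F z⁻¹ := by
    rw [← himg]
    exact integral_image_eq_integral_abs_deriv_smul measurableSet_Ioi hinv_deriv hinv_inj F
  have hFinv_int : IntegrableOn (fun z => |(-(z ^ 2)⁻¹)| • F z⁻¹) (Ioi 1) := by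
    rw [← integrableOn_image_iff_integrableOn_abs_deriv_smul measurableSet_Ioi hinv_deriv
      hinv_inj F, himg]
    exact hFint.mono_set Ioo_subset_Ioi_self
  have hsplit : ∫ z in Ioi (0:ℝ), F z = (∫ z in Ioo (0:ℝ) 1, F z) + ∫ z in Ioi (1:ℝ), F z := by
    rw [← Ioo_union_Ici_eq_Ioi (zero_lt_one (α := ℝ)),
      setIntegral_union ((Iio_disjoint_Ici le_rfl).mono_left Ioo_subset_Iio_self) measurableSet_Ici
        (hFint.mono_set Ioo_subset_Ioi_self)
        (hFint.mono_set (Ici_subset_Ioi.mpr zero_lt_one)),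
      integral_Ici_eq_integral_Ioi]
  -- the Landen map φ on (1,∞)
  have hφ_deriv : ∀ z ∈ Ioi (1:ℝ), HasDerivWithinAt φ ((z ^ 2 + 1) / (2 * z ^ 2)) (Ioi 1) z := by
    intro z hz
    have hz0 : (0:ℝ) < z := lt_trans one_pos hz
    have h := (((hasDerivAt_pow 2 z).sub_const 1).div
      ((hasDerivAt_id z).const_mul 2) (by positivity))
    have : HasDerivAt φ ((z ^ 2 + 1) / (2 * z ^ 2)) z := by
      refine h.congr_deriv ?_
      simp only [id]
      field_simp
      ring
    exact this.hasDerivWithinAt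
  have hφ_inj : InjOn φ (Ioi 1) := by
    intro x hx y hy h
    have hx1 : (1:ℝ) < x := hx
    have hy1 : (1:ℝ) < y := hy
    have hx0 : (0:ℝ) < x := by linarith
    have hy0 : (0:ℝ) < y := by linarith
    rw [hφ, div_eq_div_iff (by positivity) (by positivity)] at h
    have h2 : (x - y) * (x * y + 1) = 0 := by linear_combination h / 2
    rcases mul_eq_zero.mp h2 with h3 | h3
    · linarith [sub_eq_zero.mp h3]
    · nlinarith
  have hφ_img : φ '' (Ioi 1) = Ioi 0 := by
    ext w
    simp only [mem_image, mem_Ioi]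
    constructor
    · rintro ⟨z, hz, rfl⟩
      have hz0 : (0:ℝ) < z := lt_trans one_pos hz
      exact div_pos (by nlinarith) (by positivity)
    · intro hw
      have hs0 : (0:ℝ) ≤ w ^ 2 + 1 := by positivity
      have hs : Real.sqrt (w ^ 2 + 1) ^ 2 = w ^ 2 + 1 := Real.sq_sqrt hs0
      have hs1 : 1 ≤ Real.sqrt (w ^ 2 + 1) := by
        nlinarith [Real.sqrt_nonneg (w ^ 2 + 1), hs, sq_nonneg w]
      refine ⟨w + Real.sqrt (w ^ 2 + 1), by linarith, ?_⟩
      have hz0 : (0:ℝ) < w + Real.sqrt (w ^ 2 + 1) := by linarith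
      simp only [hφ]
      rw [div_eq_iff (by positivity)]
      linear_combination hs
  have step2 : ∫ w in Ioi (0:ℝ), G w
      = ∫ z in Ioi (1:ℝ), |(z ^ 2 + 1) / (2 * z ^ 2)| • G (φ z) := by
    rw [← hφ_img]
    exact integral_image_eq_integral_abs_deriv_smul measurableSet_Ioi hφ_deriv hφ_inj G
  have key : ∀ z ∈ Ioi (1:ℝ),
      |(z ^ 2 + 1) / (2 * z ^ 2)| • G (φ z) = |(-(z ^ 2)⁻¹)| • F z⁻¹ + F z := by
    intro z hz
    have hz1 : (1:ℝ) < z := hz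
    have hz0 : (0:ℝ) < z := by linarith
    have hzne : (z:ℝ) ≠ 0 := hz0.ne'
    have hp := hpos z
    have hqz := hq z
    have hq' : a₀ * (z⁻¹) ^ 4 + a₁ * (z⁻¹) ^ 2 + a₂ ≠ 0 := (hpos z⁻¹).ne'
    have hident : (16 * a₀ * a₂ * ((z ^ 2 - 1) / (2 * z)) ^ 4
        + 4 * (a₀ * a₁ + 4 * a₀ * a₂ + a₁ * a₂) * ((z ^ 2 - 1) / (2 * z)) ^ 2
        + (a₀ + a₁ + a₂) ^ 2) * z ^ 4
        = (a₀ * z ^ 4 + a₁ * z ^ 2 + a₂) * (a₂ * z ^ 4 + a₁ * z ^ 2 + a₀) := by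
      field_simp
      ring
    have hD : 0 < 16 * a₀ * a₂ * ((z ^ 2 - 1) / (2 * z)) ^ 4
        + 4 * (a₀ * a₁ + 4 * a₀ * a₂ + a₁ * a₂) * ((z ^ 2 - 1) / (2 * z)) ^ 2
        + (a₀ + a₁ + a₂) ^ 2 := by
      nlinarith [hident, mul_pos hp hqz, pow_pos hz0 4]
    have h2 : ((z:ℝ) ^ 2)⁻¹ * F z⁻¹
        = (b₁ * z ^ 2 + b₀) / (a₂ * z ^ 4 + a₁ * z ^ 2 + a₀) := by
      simp only [hF]
      rw [inv_mul_eq_div, div_div,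
        div_eq_div_iff (mul_ne_zero hq' (pow_ne_zero 2 hzne)) hqz.ne']
      field_simp
      ring
    have hNum : (8 * (a₂ * b₀ + a₀ * b₁) * ((z ^ 2 - 1) / (2 * z)) ^ 2
        + 2 * (a₀ + a₁ + a₂) * (b₀ + b₁)) * z ^ 2
        = 2 * (a₂ * b₀ + a₀ * b₁) * (z ^ 2 - 1) ^ 2
          + 2 * (a₀ + a₁ + a₂) * (b₀ + b₁) * z ^ 2 := by
      field_simp
      ring
    have hGφ : G (φ z) = (2 * (a₂ * b₀ + a₀ * b₁) * (z ^ 2 - 1) ^ 2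
          + 2 * (a₀ + a₁ + a₂) * (b₀ + b₁) * z ^ 2) * z ^ 2
        / ((a₀ * z ^ 4 + a₁ * z ^ 2 + a₂) * (a₂ * z ^ 4 + a₁ * z ^ 2 + a₀)) := by
      simp only [hG, hφ]
      rw [div_eq_div_iff hD.ne' (mul_pos hp hqz).ne', ← hNum, ← hident]
      ring
    rw [smul_eq_mul, smul_eq_mul, abs_of_pos (by positivity : (0:ℝ) < (z ^ 2 + 1) / (2 * z ^ 2)),
      abs_neg, abs_of_pos (by positivity : (0:ℝ) < ((z:ℝ) ^ 2)⁻¹), h2, hGφ]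
    simp only [hF]
    rw [div_mul_div_comm, div_add_div _ _ hqz.ne' hp.ne',
      div_eq_div_iff (mul_ne_zero (by positivity) (mul_pos hp hqz).ne')
        (mul_pos hqz hp).ne']
    ring
  calc ∫ z in Ioi (0:ℝ), F z
      = (∫ z in Ioo (0:ℝ) 1, F z) + ∫ z in Ioi (1:ℝ), F z := hsplit
    _ = ∫ z in Ioi (1:ℝ), (|(-(z ^ 2)⁻¹)| • F z⁻¹ + F z) := by
        rw [step1, ← integral_add hFinv_int (hFint.mono_set fun x hx => mem_Ioi.mpr (lt_trans zero_lt_one hx))]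
    _ = ∫ z in Ioi (1:ℝ), |(z ^ 2 + 1) / (2 * z ^ 2)| • G (φ z) :=
        (setIntegral_congr_fun measurableSet_Ioi fun z hz => (key z hz).symm)
    _ = ∫ w in Ioi (0:ℝ), G w := step2.symm
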